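/- There exist universal constants c₁, c₂ > 0 such that for every δ ∈ (0,1), if N₁ ≥ max{c₁ b², c₂ σ²/Δ²} · log(1/δ), then with probability at least 1 − 6δ the midpoint (μ₁+μ₂)/2 is the unique minimizer of |ȳ − μ| over μ ∈ 𝔻⁺, i.e., |ȳ − (μ₁+μ₂)/2| < |ȳ − μ| for every μ ∈ 𝔻⁺ with μ ≠ (μ₁+μ₂)/2. -/

import Mathlib

open MeasureTheory ProbabilityTheory Real NNReal

section Helpers
variable {Ω : Type*} [MeasurableSpace Ω] {P : Measure Ω}

lemma my_iIndepFun_precomp {ι ι' : Type*} {β : Type*} {mβ : MeasurableSpace β}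
    {f : ι → Ω → β} (h : iIndepFun (m := fun _ => mβ) f P)
    (g : ι' → ι) (r : ι → ι') (hgr : ∀ i, r (g i) = i) :
    iIndepFun (m := fun _ => mβ) (fun i => f (g i)) P := by
  have hg : Function.Injective g := fun a b hab => by rw [← hgr a, hab, hgr]
  rw [iIndepFun_iff_measure_inter_preimage_eq_mul] at h ⊢
  intro S sets hsets
  classical
  have key := h (S.map ⟨g, hg⟩) (sets := fun j => sets (r j)) ?_
  · have h1 : (⋂ j ∈ S.map ⟨g, hg⟩, f j ⁻¹' sets (r j)) = ⋂ i ∈ S, f (g i) ⁻¹' sets i := by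
      ext ω
      simp only [Set.mem_iInter, Finset.mem_map, Function.Embedding.coeFn_mk]
      constructor
      · intro hmem i hi
        have := hmem (g i) ⟨i, hi, rfl⟩
        rwa [hgr] at this
      · rintro hmem j ⟨i, hi, rfl⟩
        rw [hgr]; exact hmem i hi
    have h2 : ∏ j ∈ S.map ⟨g, hg⟩, P (f j ⁻¹' sets (r j)) = ∏ i ∈ S, P (f (g i) ⁻¹' sets i) := by
      rw [Finset.prod_map]
      exact Finset.prod_congr rfl fun i _ => by rw [Function.Embedding.coeFn_mk, hgr]
    rw [← h1, ← h2]; exact key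
  · intro j hj
    rw [Finset.mem_map] at hj
    obtain ⟨i, hi, rfl⟩ := hj
    simpa only [Function.Embedding.coeFn_mk, hgr] using hsets i hi

lemma my_iIndepFun_congr {ι : Type*} {β : Type*} {mβ : MeasurableSpace β}
    {f g : ι → Ω → β} (h : iIndepFun (m := fun _ => mβ) f P)
    (hfg : ∀ i, f i =ᵐ[P] g i) : iIndepFun (m := fun _ => mβ) g P := by
  rw [iIndepFun_iff_measure_inter_preimage_eq_mul] at h ⊢
  intro S sets hsets
  have hae : ∀ i, (f i ⁻¹' sets i : Set Ω) =ᵐ[P] (g i ⁻¹' sets i) := fun i =>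
    Filter.eventuallyEq_set.mpr <| (hfg i).mono fun ω hω => by
      simp only [Set.mem_preimage, hω]
  have hall : ∀ᵐ ω ∂P, ∀ i ∈ S, f i ω = g i ω :=
    (ae_ball_iff S.countable_toSet).mpr fun i _ => hfg i
  have hae2 : (⋂ i ∈ S, f i ⁻¹' sets i : Set Ω) =ᵐ[P] (⋂ i ∈ S, g i ⁻¹' sets i) := by
    refine Filter.eventuallyEq_set.mpr <| hall.mono fun ω hω => ?_
    simp only [Set.mem_iInter, Set.mem_preimage]
    exact ⟨fun hmem i hi => (hω i hi) ▸ hmem i hi, fun hmem i hi => (hω i hi).symm ▸ hmem i hi⟩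
  rw [← measure_congr hae2, h S hsets]
  exact Finset.prod_congr rfl fun i hi => measure_congr (hae i)

lemma my_bernoulli_mgf [IsProbabilityMeasure P] {y : Ω → ℝ}
    (hmap : Measure.map y P =
      (1/2 : ENNReal) • Measure.dirac (1 : ℝ) + (1/2 : ENNReal) • Measure.dirac (0 : ℝ))
    (t : ℝ) :
    Integrable (fun ω => exp (t * (y ω - 1/2))) P ∧
      mgf (fun ω => y ω - 1/2) P t ≤ exp ((1/4) * t^2 / 2) := by
  have hae : AEMeasurable y P := by
    by_contra hc
    rw [Measure.map_of_not_aemeasurable hc] at hmap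
    have := congrArg (fun m : Measure ℝ => m Set.univ) hmap
    simp at this
    exact zero_ne_one (this.trans ENNReal.inv_two_add_inv_two)
  have hcont : Continuous fun x : ℝ => exp (t * (x - 1/2)) := by continuity
  have hint1 : Integrable (fun x => exp (t * (x - 1/2))) (Measure.dirac (1:ℝ)) := by
    refine (integrable_const (exp (t * (1 - 1/2)))).congr ?_
    rw [ae_dirac_eq]
    exact Filter.eventually_pure.mpr rfl
  have hint0 : Integrable (fun x => exp (t * (x - 1/2))) (Measure.dirac (0:ℝ)) := by
    refine (integrable_const (exp (t * (0 - 1/2)))).congr ?_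
    rw [ae_dirac_eq]
    exact Filter.eventually_pure.mpr rfl
  have hint_map : Integrable (fun x => exp (t * (x - 1/2))) (Measure.map y P) := by
    rw [hmap]
    exact Integrable.add_measure (hint1.smul_measure (by simp)) (hint0.smul_measure (by simp))
  have hint : Integrable (fun ω => exp (t * (y ω - 1/2))) P := by
    have := (integrable_map_measure hcont.aestronglyMeasurable hae).mp hint_map
    exact this
  refine ⟨hint, ?_⟩
  have hmgf : mgf (fun ω => y ω - 1/2) P t = ∫ x, exp (t * (x - 1/2)) ∂(Measure.map y P) := by
    rw [mgf, integral_map hae hcont.aestronglyMeasurable]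
  rw [hmgf, hmap,
    integral_add_measure (hint1.smul_measure (by simp)) (hint0.smul_measure (by simp)),
    integral_smul_measure, integral_smul_measure, integral_dirac, integral_dirac]
  have hteq : ((1/2 : ENNReal)).toReal = (1/2 : ℝ) := by simp
  rw [hteq]
  have : (1/2 : ℝ) • exp (t * (1 - 1/2)) + (1/2 : ℝ) • exp (t * (0 - 1/2)) = cosh (t/2) := by
    rw [Real.cosh_eq]
    norm_num
    ring_nf
  rw [this]
  calc cosh (t/2) ≤ exp ((t/2)^2/2) := Real.cosh_le_exp_half_sq _
    _ = exp ((1/4) * t^2/2) := by ring_nf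

lemma my_gauss_pointwise {v : ℝ≥0} (hv : v ≠ 0) (t x : ℝ) :
    gaussianPDFReal 0 v x * exp (t * x)
      = exp ((v:ℝ) * t^2 / 2) * gaussianPDFReal ((v:ℝ) * t) v x := by
  have hv0 : (0:ℝ) < (v:ℝ) := lt_of_le_of_ne (by positivity) (by exact_mod_cast hv.symm)
  simp only [gaussianPDFReal]
  have hexp : -(x - 0)^2/(2*(v:ℝ)) + t*x = (v:ℝ)*t^2/2 + -(x - (v:ℝ)*t)^2/(2*(v:ℝ)) := by
    field_simp
    ring
  rw [mul_assoc, ← Real.exp_add, hexp, Real.exp_add]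
  ring

lemma my_gauss_int {v : ℝ≥0} (hv : v ≠ 0) (t : ℝ) :
    Integrable (fun x => exp (t * x)) (gaussianReal 0 v) ∧
      ∫ x, exp (t * x) ∂(gaussianReal 0 v) = exp ((v:ℝ) * t^2 / 2) := by
  have hmeasf : Measurable fun x => (gaussianPDFReal 0 v x).toNNReal :=
    (measurable_gaussianPDFReal 0 v).real_toNNReal
  have hd : gaussianReal 0 v
      = volume.withDensity (fun x => ((gaussianPDFReal 0 v x).toNNReal : ENNReal)) := by
    rw [gaussianReal_of_var_ne_zero 0 hv]
    rfl
  have hpt : ∀ x, ((gaussianPDFReal 0 v x).toNNReal : ℝ) • exp (t * x)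
      = exp ((v:ℝ) * t^2 / 2) * gaussianPDFReal ((v:ℝ) * t) v x := by
    intro x
    rw [smul_eq_mul, Real.coe_toNNReal _ (gaussianPDFReal_nonneg 0 v x)]
    exact my_gauss_pointwise hv t x
  have hint_vol : Integrable
      (fun x => ((gaussianPDFReal 0 v x).toNNReal : ℝ) • exp (t * x)) volume := by
    refine (((integrable_gaussianPDFReal ((v:ℝ)*t) v).const_mul
      (exp ((v:ℝ) * t^2 / 2))).congr ?_)
    exact ae_of_all _ fun x => (hpt x).symm
  constructor
  · rw [hd, integrable_withDensity_iff_integrable_smul hmeasf]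
    exact hint_vol
  · rw [hd, integral_withDensity_eq_integral_smul hmeasf]
    calc ∫ x, ((gaussianPDFReal 0 v x).toNNReal : ℝ≥0) • exp (t * x)
        = ∫ x, exp ((v:ℝ) * t^2 / 2) * gaussianPDFReal ((v:ℝ) * t) v x :=
          integral_congr_ae (ae_of_all _ fun x => hpt x)
      _ = exp ((v:ℝ) * t^2 / 2) := by
          rw [integral_const_mul, integral_gaussianPDFReal_eq_one _ hv, mul_one]

lemma my_gauss_mgf [IsProbabilityMeasure P] {y : Ω → ℝ} {v : ℝ≥0} (hv : v ≠ 0)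
    (hmap : Measure.map y P = gaussianReal 0 v) (t : ℝ) :
    Integrable (fun ω => exp (t * y ω)) P ∧ mgf y P t = exp ((v:ℝ) * t^2 / 2) := by
  have hae : AEMeasurable y P := by
    by_contra hc
    rw [Measure.map_of_not_aemeasurable hc] at hmap
    have := congrArg (fun m : Measure ℝ => m Set.univ) hmap
    simp at this
  have hcont : Continuous fun x : ℝ => exp (t * x) := by continuity
  obtain ⟨hint_g, hval⟩ := my_gauss_int hv t
  constructor
  · have := (integrable_map_measure hcont.aestronglyMeasurable hae).mp (by rwa [hmap])
    exact this
  · rw [mgf, ← integral_map hae hcont.aestronglyMeasurable, hmap, hval]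

lemma my_chernoff_sum [IsProbabilityMeasure P] {N : ℕ} (hN : 0 < N)
    {X : Fin N → Ω → ℝ}
    (hindep : iIndepFun X P)
    (hmeas : ∀ i, Measurable (X i))
    {K : ℝ} (hK : 0 < K)
    (hint : ∀ i t, Integrable (fun ω => exp (t * X i ω)) P)
    (hmgf : ∀ i t, mgf (X i) P t ≤ exp (K * t^2 / 2))
    {ε : ℝ} (hε : 0 ≤ ε) :
    (P {ω | ε ≤ ∑ i, X i ω}).toReal ≤ exp (-(ε^2) / (2 * N * K)) := by
  set t : ℝ := ε / (N * K) with ht_def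
  have hNpos : (0:ℝ) < N := by exact_mod_cast hN
  have ht : 0 ≤ t := by positivity
  have hseteq : {ω | ε ≤ ∑ i, X i ω} = {ω | ε ≤ (∑ i, X i) ω} := by
    ext ω; simp [Finset.sum_apply]
  have hint_sum : Integrable (fun ω => exp (t * (∑ i, X i) ω)) P :=
    hindep.integrable_exp_mul_sum hmeas (fun i _ => hint i t)
  have h1 := measure_ge_le_exp_mul_mgf (μ := P) (X := ∑ i, X i) ε ht hint_sum
  rw [hseteq]
  refine h1.trans ?_
  have h2 : mgf (∑ i, X i) P t ≤ exp (N * (K * t^2 / 2)) := by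
    rw [hindep.mgf_sum hmeas]
    calc ∏ i, mgf (X i) P t ≤ ∏ _i : Fin N, exp (K * t^2/2) :=
          Finset.prod_le_prod (fun i _ => mgf_nonneg) (fun i _ => hmgf i t)
      _ = exp (N * (K * t^2/2)) := by
          rw [Finset.prod_const, Finset.card_univ, Fintype.card_fin, ← Real.exp_nat_mul]
  calc exp (-t * ε) * mgf (∑ i, X i) P t
      ≤ exp (-t * ε) * exp (N * (K * t^2/2)) :=
        mul_le_mul_of_nonneg_left h2 (exp_nonneg _)
    _ = exp (-t * ε + N * (K * t^2/2)) := (Real.exp_add _ _).symm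
    _ = exp (-(ε^2) / (2 * N * K)) := by
        congr 1
        rw [ht_def]
        field_simp
        ring

lemma my_le_ofReal {A : Set Ω} [IsProbabilityMeasure P] {r : ℝ}
    (h : (P A).toReal ≤ r) : P A ≤ ENNReal.ofReal r :=
  calc P A = ENNReal.ofReal ((P A).toReal) := (ENNReal.ofReal_toReal (measure_ne_top _ _)).symm
    _ ≤ ENNReal.ofReal r := ENNReal.ofReal_le_ofReal h

end Helpers

set_option maxHeartbeats 1000000 in
/-- There exist universal constants `c₁, c₂ > 0` such that for every `δ ∈ (0,1)`,
if `N₁ ≥ max{c₁b², c₂σ²/Δ²}·log(1/δ)`, then with probability at least `1 − 6δ` the midpoint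
`(μ₁+μ₂)/2` is the unique minimizer of `|ȳ − μ|` over `μ ∈ 𝔻⁺ = {kΔ/2 : |k| ≤ 2b}`. -/
theorem midpoint_unique_minimizer :
    ∃ c₁ c₂ : ℝ, 0 < c₁ ∧ 0 < c₂ ∧
      ∀ (Ω : Type) (_ : MeasurableSpace Ω) (P : Measure Ω), IsProbabilityMeasure P →
      ∀ (Δ σ : ℝ) (b N₁ : ℕ) (μ₁ μ₂ δ : ℝ) (z w : Fin N₁ → Ω → ℝ),
        0 < Δ → 0 < σ → 0 < b → 0 < N₁ → δ ∈ Set.Ioo (0 : ℝ) 1 →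
        (∃ k : ℤ, |k| ≤ (b : ℤ) ∧ μ₁ = (k : ℝ) * Δ) →
        (∃ k : ℤ, |k| ≤ (b : ℤ) ∧ μ₂ = (k : ℝ) * Δ) →
        iIndepFun (Sum.elim z w) P →
        (∀ i, Measure.map (z i) P =
          (1/2 : ENNReal) • Measure.dirac (1 : ℝ) + (1/2 : ENNReal) • Measure.dirac (0 : ℝ)) →
        (∀ i, Measure.map (w i) P = gaussianReal 0 (Real.toNNReal (σ ^ 2))) →
        (N₁ : ℝ) ≥ max (c₁ * (b : ℝ) ^ 2) (c₂ * σ ^ 2 / Δ ^ 2) * Real.log (1 / δ) →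
        P {ω | ∀ μ : ℝ, (∃ k : ℤ, |k| ≤ 2 * (b : ℤ) ∧ μ = (k : ℝ) * Δ / 2) →
              μ ≠ (μ₁ + μ₂) / 2 →
              |(1 / (N₁ : ℝ)) * ∑ i, (μ₁ * (1 - z i ω) + μ₂ * z i ω + w i ω)
                  - (μ₁ + μ₂) / 2|
                < |(1 / (N₁ : ℝ)) * ∑ i, (μ₁ * (1 - z i ω) + μ₂ * z i ω + w i ω) - μ|}
          ≥ ENNReal.ofReal (1 - 6 * δ) := by
  refine ⟨128, 128, by norm_num, by norm_num, ?_⟩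
  intro Ω mΩ P hPprob Δ σ b N₁ μ₁ μ₂ δ z w hΔ hσ hb hN hδ hk1 hk2 hindep hz hw hNge
  obtain ⟨k₁, hk₁b, hμ₁⟩ := hk1
  obtain ⟨k₂, hk₂b, hμ₂⟩ := hk2
  obtain ⟨hδ0, hδ1⟩ := hδ
  have hN0 : (0:ℝ) < (N₁ : ℝ) := by exact_mod_cast hN
  have hb0 : (0:ℝ) < (b : ℝ) := by exact_mod_cast hb
  have hlog : 0 ≤ Real.log (1/δ) := Real.log_nonneg (one_le_one_div hδ0 hδ1.le)
  have hNz : 128 * (b:ℝ)^2 * Real.log (1/δ) ≤ (N₁:ℝ) :=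
    le_trans (mul_le_mul_of_nonneg_right (le_max_left _ _) hlog) hNge
  have hNw : 128 * σ^2 / Δ^2 * Real.log (1/δ) ≤ (N₁:ℝ) :=
    le_trans (mul_le_mul_of_nonneg_right (le_max_right _ _) hlog) hNge
  -- variance
  set v : ℝ≥0 := Real.toNNReal (σ^2) with hv_def
  have hv : v ≠ 0 := by
    simp only [hv_def, ne_eq, Real.toNNReal_eq_zero, not_le]
    positivity
  have hvco : ((v:ℝ)) = σ^2 := Real.coe_toNNReal _ (sq_nonneg σ)
  -- a.e.-measurable representatives
  have hzae : ∀ i, AEMeasurable (z i) P := by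
    intro i
    by_contra hc
    have h := hz i
    rw [Measure.map_of_not_aemeasurable hc] at h
    have := congrArg (fun m : Measure ℝ => m Set.univ) h
    simp at this
    exact zero_ne_one (this.trans ENNReal.inv_two_add_inv_two)
  have hwae : ∀ i, AEMeasurable (w i) P := by
    intro i
    by_contra hc
    have h := hw i
    rw [Measure.map_of_not_aemeasurable hc] at h
    have := congrArg (fun m : Measure ℝ => m Set.univ) h
    simp at this
  set Z : Fin N₁ → Ω → ℝ := fun i => (hzae i).mk (z i) with hZ_def
  set W : Fin N₁ → Ω → ℝ := fun i => (hwae i).mk (w i) with hW_def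
  have hZeq : ∀ i, z i =ᵐ[P] Z i := fun i => (hzae i).ae_eq_mk
  have hWeq : ∀ i, w i =ᵐ[P] W i := fun i => (hwae i).ae_eq_mk
  have hZm : ∀ i, Measurable (Z i) := fun i => (hzae i).measurable_mk
  have hWm : ∀ i, Measurable (W i) := fun i => (hwae i).measurable_mk
  have hZmap : ∀ i, Measure.map (Z i) P =
      (1/2 : ENNReal) • Measure.dirac (1 : ℝ) + (1/2 : ENNReal) • Measure.dirac (0 : ℝ) :=
    fun i => by rw [← Measure.map_congr (hZeq i)]; exact hz i
  have hWmap : ∀ i, Measure.map (W i) P = gaussianReal 0 v :=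
    fun i => by rw [← Measure.map_congr (hWeq i)]; exact hw i
  -- independence
  have hz_indep : iIndepFun z P :=
    my_iIndepFun_precomp hindep Sum.inl (Sum.elim id id) (fun i => rfl)
  have hw_indep : iIndepFun w P :=
    my_iIndepFun_precomp hindep Sum.inr (Sum.elim id id) (fun i => rfl)
  have hZ_indep : iIndepFun Z P := my_iIndepFun_congr hz_indep hZeq
  have hW_indep : iIndepFun W P := my_iIndepFun_congr hw_indep hWeq
  -- centered variables
  set X : Fin N₁ → Ω → ℝ := fun i ω => Z i ω - 1/2 with hX_def
  set Xm : Fin N₁ → Ω → ℝ := fun i ω => 1/2 - Z i ω with hXm_def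
  set Wm : Fin N₁ → Ω → ℝ := fun i ω => -(W i ω) with hWm_def
  have hX_indep : iIndepFun X P :=
    hZ_indep.comp (fun _ => fun x : ℝ => x - 1/2) (fun _ => measurable_id.sub measurable_const)
  have hXm_indep : iIndepFun Xm P :=
    hZ_indep.comp (fun _ => fun x : ℝ => 1/2 - x) (fun _ => measurable_const.sub measurable_id)
  have hWm_indep : iIndepFun Wm P :=
    hW_indep.comp (fun _ => fun x : ℝ => -x) (fun _ => measurable_id.neg)
  have hX_meas : ∀ i, Measurable (X i) := fun i => (hZm i).sub measurable_const
  have hXm_meas : ∀ i, Measurable (Xm i) := fun i => measurable_const.sub (hZm i)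
  have hWm_meas : ∀ i, Measurable (Wm i) := fun i => (hWm i).neg
  have hXint : ∀ i t, Integrable (fun ω => exp (t * X i ω)) P :=
    fun i t => (my_bernoulli_mgf (hZmap i) t).1
  have hXmgf : ∀ i t, mgf (X i) P t ≤ exp ((1/4) * t^2 / 2) :=
    fun i t => (my_bernoulli_mgf (hZmap i) t).2
  have hXmeq : ∀ i, Xm i = -(X i) := fun i => funext fun ω => by
    simp only [hXm_def, hX_def, Pi.neg_apply]; ring
  have hXmint : ∀ i t, Integrable (fun ω => exp (t * Xm i ω)) P := by
    intro i t
    refine (hXint i (-t)).congr (ae_of_all _ fun ω => ?_)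
    simp only [hXm_def, hX_def]
    congr 1
    ring
  have hXmmgf : ∀ i t, mgf (Xm i) P t ≤ exp ((1/4) * t^2 / 2) := by
    intro i t
    rw [hXmeq i, mgf_neg]
    calc mgf (X i) P (-t) ≤ exp ((1/4) * (-t)^2/2) := hXmgf i (-t)
      _ = exp ((1/4) * t^2/2) := by rw [neg_pow]; ring_nf
  have hWint : ∀ i t, Integrable (fun ω => exp (t * W i ω)) P :=
    fun i t => (my_gauss_mgf hv (hWmap i) t).1
  have hWmgf : ∀ i t, mgf (W i) P t ≤ exp (σ^2 * t^2 / 2) := fun i t =>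
    le_of_eq ((my_gauss_mgf hv (hWmap i) t).2.trans (by rw [hvco]))
  have hWmeq : ∀ i, Wm i = -(W i) := fun i => rfl
  have hWmint : ∀ i t, Integrable (fun ω => exp (t * Wm i ω)) P := by
    intro i t
    refine (hWint i (-t)).congr (ae_of_all _ fun ω => ?_)
    simp only [hWm_def]
    congr 1
    ring
  have hWmmgf : ∀ i t, mgf (Wm i) P t ≤ exp (σ^2 * t^2 / 2) := by
    intro i t
    rw [hWmeq i, mgf_neg]
    calc mgf (W i) P (-t) ≤ exp (σ^2 * (-t)^2/2) := hWmgf i (-t)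
      _ = exp (σ^2 * t^2/2) := by rw [neg_pow]; ring_nf
  -- tail probabilities
  set εz : ℝ := (N₁:ℝ) / (16 * b) with hεz_def
  set εw : ℝ := (N₁:ℝ) * Δ / 8 with hεw_def
  have hεz0 : 0 ≤ εz := by positivity
  have hεw0 : 0 ≤ εw := by positivity
  have hexpz : exp (-(εz^2) / (2 * (N₁:ℝ) * (1/4))) ≤ δ := by
    have harg : Real.log (1/δ) ≤ εz^2 / (2 * (N₁:ℝ) * (1/4)) := by
      have heq : εz^2 / (2 * (N₁:ℝ) * (1/4)) = (N₁:ℝ) / (128 * (b:ℝ)^2) := by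
        rw [hεz_def]
        field_simp
        ring
      rw [heq, le_div_iff₀ (by positivity)]
      nlinarith [hNz]
    calc exp (-(εz^2) / (2 * (N₁:ℝ) * (1/4)))
        = exp (-(εz^2 / (2 * (N₁:ℝ) * (1/4)))) := by rw [neg_div]
      _ ≤ exp (Real.log δ) := by
          apply Real.exp_le_exp.mpr
          have : Real.log (1/δ) = -Real.log δ := by rw [one_div, Real.log_inv]
          linarith [harg, this]
      _ = δ := Real.exp_log hδ0
  have hexpw : exp (-(εw^2) / (2 * (N₁:ℝ) * σ^2)) ≤ δ := by
    have harg : Real.log (1/δ) ≤ εw^2 / (2 * (N₁:ℝ) * σ^2) := by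
      have heq : εw^2 / (2 * (N₁:ℝ) * σ^2) = (N₁:ℝ) * Δ^2 / (128 * σ^2) := by
        rw [hεw_def]
        field_simp
        ring
      rw [heq, le_div_iff₀ (by positivity)]
      have h2 := mul_le_mul_of_nonneg_right hNw (le_of_lt (by positivity : (0:ℝ) < Δ^2))
      have h3 : 128 * σ^2 / Δ^2 * Real.log (1/δ) * Δ^2 = Real.log (1/δ) * (128 * σ^2) := by
        field_simp
      nlinarith [h2, h3]
    calc exp (-(εw^2) / (2 * (N₁:ℝ) * σ^2))
        = exp (-(εw^2 / (2 * (N₁:ℝ) * σ^2))) := by rw [neg_div]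
      _ ≤ exp (Real.log δ) := by
          apply Real.exp_le_exp.mpr
          have : Real.log (1/δ) = -Real.log δ := by rw [one_div, Real.log_inv]
          linarith [harg, this]
      _ = δ := Real.exp_log hδ0
  have hAzp : P {ω | εz ≤ ∑ i, X i ω} ≤ ENNReal.ofReal δ :=
    my_le_ofReal ((my_chernoff_sum hN hX_indep hX_meas (by norm_num) hXint hXmgf hεz0).trans hexpz)
  have hAzm : P {ω | εz ≤ ∑ i, Xm i ω} ≤ ENNReal.ofReal δ :=
    my_le_ofReal ((my_chernoff_sum hN hXm_indep hXm_meas (by norm_num) hXmint hXmmgf hεz0).trans hexpz)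
  have hBwp : P {ω | εw ≤ ∑ i, W i ω} ≤ ENNReal.ofReal δ :=
    my_le_ofReal ((my_chernoff_sum hN hW_indep hWm (by positivity) hWint hWmgf hεw0).trans hexpw)
  have hBwm : P {ω | εw ≤ ∑ i, Wm i ω} ≤ ENNReal.ofReal δ :=
    my_le_ofReal ((my_chernoff_sum hN hWm_indep hWm_meas (by positivity) hWmint hWmmgf hεw0).trans hexpw)
  -- key algebra
  have hkey : ∀ (f g : Fin N₁ → ℝ),
      (1/(N₁:ℝ)) * ∑ i, (μ₁ * (1 - f i) + μ₂ * f i + g i) - (μ₁ + μ₂)/2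
        = (1/(N₁:ℝ)) * ((μ₂ - μ₁) * (∑ i, (f i - 1/2)) + ∑ i, g i) := by
    intro f g
    have h1 : ∀ i : Fin N₁, μ₁ * (1 - f i) + μ₂ * f i + g i
        = (μ₁ + μ₂)/2 + ((μ₂ - μ₁) * (f i - 1/2) + g i) := fun i => by ring
    rw [Finset.sum_congr rfl (fun i _ => h1 i), Finset.sum_add_distrib, Finset.sum_add_distrib,
      Finset.sum_const, Finset.card_univ, Fintype.card_fin, nsmul_eq_mul, Finset.mul_sum,
      ← Finset.mul_sum]
    field_simp
    ring
  -- the good events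
  set E : Set Ω := {ω | |(1/(N₁:ℝ)) * ∑ i, (μ₁ * (1 - Z i ω) + μ₂ * Z i ω + W i ω)
      - (μ₁ + μ₂)/2| < Δ/4} with hE_def
  set E₀ : Set Ω := {ω | |(1/(N₁:ℝ)) * ∑ i, (μ₁ * (1 - z i ω) + μ₂ * z i ω + w i ω)
      - (μ₁ + μ₂)/2| < Δ/4} with hE₀_def
  -- E₀ is contained in the target event
  have hsubset : E₀ ⊆ {ω | ∀ μ : ℝ, (∃ k : ℤ, |k| ≤ 2 * (b : ℤ) ∧ μ = (k : ℝ) * Δ / 2) →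
      μ ≠ (μ₁ + μ₂) / 2 →
      |(1 / (N₁ : ℝ)) * ∑ i, (μ₁ * (1 - z i ω) + μ₂ * z i ω + w i ω) - (μ₁ + μ₂) / 2|
        < |(1 / (N₁ : ℝ)) * ∑ i, (μ₁ * (1 - z i ω) + μ₂ * z i ω + w i ω) - μ|} := by
    intro ω hω μ hμmem hμne
    obtain ⟨k, hkb, hμeq⟩ := hμmem
    set yb : ℝ := (1/(N₁:ℝ)) * ∑ i, (μ₁ * (1 - z i ω) + μ₂ * z i ω + w i ω) with hyb_def
    have hωE : |yb - (μ₁ + μ₂)/2| < Δ/4 := hω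
    have hmgrid : (μ₁ + μ₂)/2 = ((k₁ + k₂ : ℤ) : ℝ) * Δ / 2 := by
      rw [hμ₁, hμ₂]
      push_cast
      ring
    have hkk : k ≠ k₁ + k₂ := by
      intro hcontra
      apply hμne
      rw [hμeq, hmgrid, hcontra]
    have habs : (1:ℝ) ≤ |((k - (k₁ + k₂) : ℤ) : ℝ)| := by
      have : (1:ℤ) ≤ |k - (k₁ + k₂)| := Int.one_le_abs (sub_ne_zero.mpr hkk)
      calc (1:ℝ) = ((1:ℤ):ℝ) := by norm_num
        _ ≤ ((|k - (k₁ + k₂)| : ℤ) : ℝ) := by exact_mod_cast this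
        _ = |((k - (k₁ + k₂) : ℤ) : ℝ)| := by rw [Int.cast_abs]
    have hdist : Δ/2 ≤ |μ - (μ₁ + μ₂)/2| := by
      have : μ - (μ₁ + μ₂)/2 = ((k - (k₁ + k₂) : ℤ) : ℝ) * (Δ/2) := by
        rw [hμeq, hmgrid]
        push_cast
        ring
      rw [this, abs_mul, abs_of_pos (by positivity : (0:ℝ) < Δ/2)]
      nlinarith [habs, hΔ]
    have htri : |μ - (μ₁ + μ₂)/2| ≤ |μ - yb| + |yb - (μ₁ + μ₂)/2| := abs_sub_le μ yb _
    have hcomm : |μ - yb| = |yb - μ| := abs_sub_comm μ yb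
    show |yb - (μ₁ + μ₂)/2| < |yb - μ|
    linarith
  -- E and E₀ agree almost everywhere
  have hEae : E₀ =ᵐ[P] E := by
    have hall : ∀ᵐ ω ∂P, (∀ i, z i ω = Z i ω) ∧ (∀ i, w i ω = W i ω) := by
      refine Filter.Eventually.and ?_ ?_
      · exact ae_all_iff.mpr fun i => hZeq i
      · exact ae_all_iff.mpr fun i => hWeq i
    refine Filter.eventuallyEq_set.mpr (hall.mono fun ω hω => ?_)
    obtain ⟨hωz, hωw⟩ := hω
    have : (∑ i, (μ₁ * (1 - z i ω) + μ₂ * z i ω + w i ω))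
        = ∑ i, (μ₁ * (1 - Z i ω) + μ₂ * Z i ω + W i ω) :=
      Finset.sum_congr rfl fun i _ => by rw [hωz i, hωw i]
    simp only [hE₀_def, hE_def, Set.mem_setOf_eq, this]
  -- complement of E is contained in the union of tail events
  have hcompl : Eᶜ ⊆ {ω | εz ≤ ∑ i, X i ω} ∪ ({ω | εz ≤ ∑ i, Xm i ω}
      ∪ ({ω | εw ≤ ∑ i, W i ω} ∪ {ω | εw ≤ ∑ i, Wm i ω})) := by
    intro ω hω
    simp only [hE_def, Set.mem_compl_iff, Set.mem_setOf_eq, not_lt] at hω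
    rw [hkey (fun i => Z i ω) (fun i => W i ω)] at hω
    set Sz : ℝ := ∑ i, (Z i ω - 1/2) with hSz_def
    set Sw : ℝ := ∑ i, W i ω with hSw_def
    have hd : |μ₂ - μ₁| ≤ 2 * (b:ℝ) * Δ := by
      rw [hμ₂, hμ₁, ← sub_mul, abs_mul, abs_of_pos hΔ]
      have h1 : |((k₂:ℝ)) - (k₁:ℝ)| ≤ 2 * (b:ℝ) := by
        have h2 : |k₂ - k₁| ≤ 2 * (b:ℤ) := by
          calc |k₂ - k₁| ≤ |k₂| + |k₁| := abs_sub k₂ k₁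
            _ ≤ (b:ℤ) + (b:ℤ) := add_le_add hk₂b hk₁b
            _ = 2 * (b:ℤ) := by ring
        calc |((k₂:ℝ)) - (k₁:ℝ)| = |((k₂ - k₁ : ℤ) : ℝ)| := by push_cast; ring_nf
          _ = ((|k₂ - k₁| : ℤ) : ℝ) := by rw [Int.cast_abs]
          _ ≤ ((2 * (b:ℤ) : ℤ) : ℝ) := by exact_mod_cast h2
          _ = 2 * (b:ℝ) := by push_cast; ring
      nlinarith [h1, hΔ]
    have habs2 : (N₁:ℝ) * Δ / 4 ≤ |μ₂ - μ₁| * |Sz| + |Sw| := by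
      have h1 : Δ/4 ≤ (1/(N₁:ℝ)) * |(μ₂ - μ₁) * Sz + Sw| := by
        calc Δ/4 ≤ |(1/(N₁:ℝ)) * ((μ₂ - μ₁) * Sz + Sw)| := hω
          _ = (1/(N₁:ℝ)) * |(μ₂ - μ₁) * Sz + Sw| := by
              rw [abs_mul, abs_of_pos (by positivity : (0:ℝ) < 1/(N₁:ℝ))]
      have h2 : (N₁:ℝ) * Δ / 4 ≤ |(μ₂ - μ₁) * Sz + Sw| := by
        have h1' := mul_le_mul_of_nonneg_left h1 hN0.le
        have heq : (N₁:ℝ) * ((1/(N₁:ℝ)) * |(μ₂ - μ₁) * Sz + Sw|)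
            = |(μ₂ - μ₁) * Sz + Sw| := by field_simp
        rw [heq] at h1'
        linarith
      calc (N₁:ℝ) * Δ / 4 ≤ |(μ₂ - μ₁) * Sz + Sw| := h2
        _ ≤ |(μ₂ - μ₁) * Sz| + |Sw| := abs_add_le _ _
        _ = |μ₂ - μ₁| * |Sz| + |Sw| := by rw [abs_mul]
    by_cases hcase : εw ≤ |Sw|
    · rcases le_abs.mp hcase with h | h
      · exact Or.inr (Or.inr (Or.inl h))
      · refine Or.inr (Or.inr (Or.inr ?_))
        show εw ≤ ∑ i, Wm i ω
        have hsum : ∑ i, Wm i ω = -Sw := by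
          simp only [hWm_def]
          rw [hSw_def]
          exact Finset.sum_neg_distrib _
        rw [hsum]
        exact h
    · have hSwlt : |Sw| < εw := not_le.mp hcase
      have h5 : (N₁:ℝ) * Δ / 8 ≤ |μ₂ - μ₁| * |Sz| := by
        have hεweq : εw = (N₁:ℝ) * Δ / 8 := hεw_def
        linarith
      have h7 : (N₁:ℝ) * Δ / 8 ≤ 2*(b:ℝ)*Δ * |Sz| :=
        h5.trans (mul_le_mul_of_nonneg_right hd (abs_nonneg _))
      have h6 : εz ≤ |Sz| := by
        rw [hεz_def, div_le_iff₀ (by positivity)]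
        nlinarith [h7, hΔ, hN0]
      rcases le_abs.mp h6 with h | h
      · refine Or.inl ?_
        show εz ≤ ∑ i, X i ω
        have hsum : (∑ i, X i ω) = Sz := by
          rw [hSz_def]
        rw [hsum]
        exact h
      · refine Or.inr (Or.inl ?_)
        show εz ≤ ∑ i, Xm i ω
        have hsum : (∑ i, Xm i ω) = -Sz := by
          simp only [hXm_def]
          rw [hSz_def, ← Finset.sum_neg_distrib]
          exact Finset.sum_congr rfl fun i _ => by ring
        rw [hsum]
        exact h
  -- assemble
  have hEc : P Eᶜ ≤ ENNReal.ofReal (6*δ) := by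
    calc P Eᶜ ≤ P ({ω | εz ≤ ∑ i, X i ω} ∪ ({ω | εz ≤ ∑ i, Xm i ω}
        ∪ ({ω | εw ≤ ∑ i, W i ω} ∪ {ω | εw ≤ ∑ i, Wm i ω}))) := measure_mono hcompl
      _ ≤ P {ω | εz ≤ ∑ i, X i ω} + P ({ω | εz ≤ ∑ i, Xm i ω}
          ∪ ({ω | εw ≤ ∑ i, W i ω} ∪ {ω | εw ≤ ∑ i, Wm i ω})) := measure_union_le _ _
      _ ≤ P {ω | εz ≤ ∑ i, X i ω} + (P {ω | εz ≤ ∑ i, Xm i ω}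
          + P ({ω | εw ≤ ∑ i, W i ω} ∪ {ω | εw ≤ ∑ i, Wm i ω})) :=
          add_le_add le_rfl (measure_union_le _ _)
      _ ≤ P {ω | εz ≤ ∑ i, X i ω} + (P {ω | εz ≤ ∑ i, Xm i ω}
          + (P {ω | εw ≤ ∑ i, W i ω} + P {ω | εw ≤ ∑ i, Wm i ω})) :=
          add_le_add le_rfl (add_le_add le_rfl (measure_union_le _ _))
      _ ≤ ENNReal.ofReal δ + (ENNReal.ofReal δ + (ENNReal.ofReal δ + ENNReal.ofReal δ)) :=
          add_le_add hAzp (add_le_add hAzm (add_le_add hBwp hBwm))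
      _ = ENNReal.ofReal (δ + (δ + (δ + δ))) := by
          rw [← ENNReal.ofReal_add hδ0.le hδ0.le,
            ← ENNReal.ofReal_add hδ0.le (by linarith : (0:ℝ) ≤ δ + δ),
            ← ENNReal.ofReal_add hδ0.le (by linarith : (0:ℝ) ≤ δ + (δ + δ))]
      _ ≤ ENNReal.ofReal (6*δ) := ENNReal.ofReal_le_ofReal (by linarith)
  calc ENNReal.ofReal (1 - 6*δ) = ENNReal.ofReal 1 - ENNReal.ofReal (6*δ) :=
        ENNReal.ofReal_sub _ (by positivity)
    _ = 1 - ENNReal.ofReal (6*δ) := by rw [ENNReal.ofReal_one]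
    _ ≤ 1 - P Eᶜ := tsub_le_tsub_left hEc 1
    _ ≤ P E := by
        rw [tsub_le_iff_right]
        calc (1:ENNReal) = P Set.univ := measure_univ.symm
          _ = P (E ∪ Eᶜ) := by rw [Set.union_compl_self]
          _ ≤ P E + P Eᶜ := measure_union_le _ _
    _ = P E₀ := (measure_congr hEae).symm
    _ ≤ _ := measure_mono hsubset
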